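/- For the generalized Petersen graph P(n,k) with n ≥ 2k and k ≥ 1, the 1-leaky forcing number satisfies Z_{(1)}(P(n,k)) ≤ 2k + 2. -/

import Mathlib

open SimpleGraph

namespace LF

variable {V : Type*}

/-- Vertices eventually forced blue, starting from `S`, with leak set `L`:
a blue vertex not in `L` whose every neighbor other than `w` is blue forces `w`. -/
inductive Forced (G : SimpleGraph V) (L S : Set V) : V → Prop
  | init (v : V) (hv : v ∈ S) : Forced G L S v
  | force (b w : V) (hb : Forced G L S b) (hbL : b ∉ L) (hadj : G.Adj b w)
      (hall : ∀ u, G.Adj b u → u ≠ w → Forced G L S u) : Forced G L S w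

/-- `S` is an ℓ-leaky forcing set of `G`. -/
def IsLeakyForcingSet (G : SimpleGraph V) (ℓ : ℕ) (S : Set V) : Prop :=
  ∀ L : Set V, L.ncard ≤ ℓ → ∀ v, Forced G L S v

/-- The ℓ-leaky forcing number `Z_{(ℓ)}(G)`. -/
noncomputable def leakyForcingNumber (G : SimpleGraph V) [Fintype V] (ℓ : ℕ) : ℕ :=
  sInf {k | ∃ S : Finset V, S.card = k ∧ IsLeakyForcingSet G ℓ ↑S}

/-- An ℓ-leaky fort: a nonempty set `F` such that at most ℓ vertices outside `F`
have exactly one neighbor in `F`. -/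
def IsLeakyFort (G : SimpleGraph V) (ℓ : ℕ) (F : Set V) : Prop :=
  F.Nonempty ∧ {v | v ∉ F ∧ ∃! u, u ∈ F ∧ G.Adj v u}.ncard ≤ ℓ

/-- The path graph on `n` vertices. -/
def pathGraph (n : ℕ) : SimpleGraph (Fin n) :=
  SimpleGraph.fromRel (fun i j => i.val + 1 = j.val)

/-- The cycle graph on `n` vertices. -/
def cycleGraph (n : ℕ) : SimpleGraph (Fin n) :=
  SimpleGraph.fromRel (fun i j => (i.val + 1) % n = j.val)

/-- The star graph on `n` vertices, with center `0`. -/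
def starGraph (n : ℕ) : SimpleGraph (Fin n) :=
  SimpleGraph.fromRel (fun i _ => i.val = 0)

/-- The generalized Petersen graph `P(n,k)`: `Sum.inl i` is the inner vertex `x_{i+1}`,
`Sum.inr i` is the outer vertex `y_{i+1}` (0-indexed). -/
def petersen (n k : ℕ) : SimpleGraph (Fin n ⊕ Fin n) :=
  SimpleGraph.fromRel (fun a b =>
    match a, b with
    | Sum.inr i, Sum.inr j => (i.val + 1) % n = j.val
    | Sum.inl i, Sum.inr j => i = j
    | Sum.inl i, Sum.inl j => (i.val + k) % n = j.val
    | _, _ => False)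

end LF


namespace LFP
open LF

def en (n : ℕ) [NeZero n] (z : ℤ) : Fin n :=
  ⟨(z % (n:ℤ)).toNat, by
    have h0 : 0 < (n:ℤ) := by exact_mod_cast Nat.pos_of_ne_zero (NeZero.ne n)
    have h1 := Int.emod_nonneg z (ne_of_gt h0)
    have h2 := Int.emod_lt_of_pos z h0
    omega⟩

def Xv (n : ℕ) [NeZero n] (z : ℤ) : Fin n ⊕ Fin n := Sum.inl (en n z)
def Yv (n : ℕ) [NeZero n] (z : ℤ) : Fin n ⊕ Fin n := Sum.inr (en n z)

variable {n k : ℕ} [NeZero n]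

lemma en_val (z : ℤ) : ((en n z).val : ℤ) = z % (n:ℤ) := by
  have h0 : 0 < (n:ℤ) := by exact_mod_cast Nat.pos_of_ne_zero (NeZero.ne n)
  exact Int.toNat_of_nonneg (Int.emod_nonneg z (ne_of_gt h0))

lemma en_step (z : ℤ) (c : ℕ) : ((en n z).val + c) % n = (en n (z + c)).val := by
  have : (((((en n z).val + c) % n : ℕ)) : ℤ) = (((en n (z + c)).val : ℕ) : ℤ) := by
    push_cast
    rw [en_val, en_val, Int.emod_add_emod]
  exact_mod_cast this

lemma en_eq_iff (z w : ℤ) : en n z = en n w ↔ z % (n:ℤ) = w % (n:ℤ) := by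
  constructor
  · intro h
    have := congrArg (fun x : Fin n => ((x.val : ℕ) : ℤ)) h
    simpa [en_val] using this
  · intro h
    apply Fin.ext
    have : ((en n z).val : ℤ) = ((en n w).val : ℤ) := by rw [en_val, en_val, h]
    exact_mod_cast this

lemma en_ne (z c : ℤ) (hc : ¬ (n:ℤ) ∣ c) : en n z ≠ en n (z + c) := by
  intro h
  rw [en_eq_iff] at h
  rw [Int.emod_eq_emod_iff_emod_sub_eq_zero] at h
  apply hc
  have : (z - (z + c)) % (n:ℤ) = 0 := h
  have : (-c) % (n:ℤ) = 0 := by rw [← this]; ring_nf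
  have := Int.dvd_of_emod_eq_zero this
  exact (Int.dvd_neg).mp this

lemma mod_cancel {a b c : ℕ} (ha : a < n) (hb : b < n) (h : (a + c) % n = (b + c) % n) : a = b := by
  have h1 : a ≡ b [MOD n] := Nat.ModEq.add_right_cancel' c h
  have := Nat.ModEq.eq_of_lt_of_lt h1 ha hb
  exact this

lemma not_dvd_one (hn2 : 2 ≤ n) : ¬ (n:ℤ) ∣ 1 := by
  intro h
  have := Int.le_of_dvd one_pos h
  omega

lemma not_dvd_k (hk : 0 < k) (hkn : k < n) : ¬ (n:ℤ) ∣ (k:ℤ) := by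
  intro h
  have := Int.le_of_dvd (by exact_mod_cast hk) h
  omega

lemma adj_XY (z : ℤ) : (petersen n k).Adj (Xv n z) (Yv n z) := by
  rw [petersen, SimpleGraph.fromRel_adj]
  exact ⟨by simp [Xv, Yv], Or.inl rfl⟩

lemma adj_YY (hn2 : 2 ≤ n) (z : ℤ) : (petersen n k).Adj (Yv n z) (Yv n (z+1)) := by
  rw [petersen, SimpleGraph.fromRel_adj]
  refine ⟨?_, Or.inl ?_⟩
  · simp only [Yv, ne_eq, Sum.inr.injEq]
    exact en_ne z 1 (not_dvd_one hn2)
  · exact en_step z 1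

lemma adj_XX (hk : 0 < k) (hkn : k < n) (z : ℤ) :
    (petersen n k).Adj (Xv n z) (Xv n (z+k)) := by
  rw [petersen, SimpleGraph.fromRel_adj]
  refine ⟨?_, Or.inl ?_⟩
  · simp only [Xv, ne_eq, Sum.inl.injEq]
    exact en_ne z k (not_dvd_k hk hkn)
  · exact en_step z k

lemma nbr_Y (z : ℤ) (u : Fin n ⊕ Fin n) (h : (petersen n k).Adj (Yv n z) u) :
    u = Yv n (z+1) ∨ u = Yv n (z-1) ∨ u = Xv n z := by
  rw [petersen, SimpleGraph.fromRel_adj] at h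
  obtain ⟨hne, h | h⟩ := h
  · cases u with
    | inl j => exact h.elim
    | inr j =>
      left
      simp only [Yv, Sum.inr.injEq]
      apply Fin.ext
      have : ((en n z).val + 1) % n = j.val := h
      rw [en_step z 1] at this
      exact this.symm
  · cases u with
    | inl j =>
      right; right
      have h' : j = en n z := h
      exact congrArg Sum.inl h'
    | inr j =>
      right; left
      simp only [Yv, Sum.inr.injEq]
      have h' : (j.val + 1) % n = (en n z).val := h
      have h2 : ((en n (z-1)).val + 1) % n = (en n z).val := by
        have h3 := en_step (n:=n) (z-1) 1
        have he : z - 1 + ((1:ℕ):ℤ) = z := by push_cast; ring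
        rw [he] at h3
        exact h3
      apply Fin.ext
      exact mod_cancel j.isLt (en n (z-1)).isLt (h'.trans h2.symm)

lemma nbr_X (z : ℤ) (u : Fin n ⊕ Fin n) (h : (petersen n k).Adj (Xv n z) u) :
    u = Xv n (z+k) ∨ u = Xv n (z-k) ∨ u = Yv n z := by
  rw [petersen, SimpleGraph.fromRel_adj] at h
  obtain ⟨hne, h | h⟩ := h
  · cases u with
    | inl j =>
      left
      simp only [Xv, Sum.inl.injEq]
      apply Fin.ext
      have : ((en n z).val + k) % n = j.val := h
      rw [en_step z k] at this
      exact this.symm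
    | inr j =>
      right; right
      have h' : en n z = j := h
      exact congrArg Sum.inr h'.symm
  · cases u with
    | inl j =>
      right; left
      simp only [Xv, Sum.inl.injEq]
      have h' : (j.val + k) % n = (en n z).val := h
      have h2 : ((en n (z-k)).val + k) % n = (en n z).val := by
        have h3 := en_step (n:=n) (z-k) k
        have he : z - k + ((k:ℕ):ℤ) = z := by push_cast; ring
        rw [he] at h3
        exact h3
      apply Fin.ext
      exact mod_cancel j.isLt (en n (z-k)).isLt (h'.trans h2.symm)
    | inr j => exact h.elim

end LFP

namespace LFP
open LF

variable {n k : ℕ} [NeZero n] {L S : Set (Fin n ⊕ Fin n)}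

lemma forceY_up (hn2 : 2 ≤ n) (m : ℤ)
    (h0 : Forced (petersen n k) L S (Yv n m))
    (h1 : Forced (petersen n k) L S (Yv n (m-1)))
    (h2 : Forced (petersen n k) L S (Xv n m))
    (hL : Yv n m ∉ L) :
    Forced (petersen n k) L S (Yv n (m+1)) := by
  refine Forced.force (Yv n m) _ h0 hL (adj_YY hn2 m) ?_
  intro u hu hne
  rcases nbr_Y m u hu with h | h | h
  · exact absurd h hne
  · rw [h]; exact h1
  · rw [h]; exact h2

lemma forceY_down (hn2 : 2 ≤ n) (m : ℤ)
    (h0 : Forced (petersen n k) L S (Yv n m))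
    (h1 : Forced (petersen n k) L S (Yv n (m+1)))
    (h2 : Forced (petersen n k) L S (Xv n m))
    (hL : Yv n m ∉ L) :
    Forced (petersen n k) L S (Yv n (m-1)) := by
  have hadj : (petersen n k).Adj (Yv n m) (Yv n (m-1)) := by
    have h := (adj_YY (n:=n) (k:=k) hn2 (m-1)).symm
    have he : m - 1 + 1 = m := by ring
    rw [he] at h
    exact h
  refine Forced.force (Yv n m) _ h0 hL hadj ?_
  intro u hu hne
  rcases nbr_Y m u hu with h | h | h
  · rw [h]; exact h1
  · exact absurd h hne
  · rw [h]; exact h2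

lemma forceX_up (hk0 : 0 < k) (hkn : k < n) (m : ℤ)
    (h0 : Forced (petersen n k) L S (Xv n m))
    (h1 : Forced (petersen n k) L S (Xv n (m-k)))
    (h2 : Forced (petersen n k) L S (Yv n m))
    (hL : Xv n m ∉ L) :
    Forced (petersen n k) L S (Xv n (m+k)) := by
  refine Forced.force (Xv n m) _ h0 hL (adj_XX hk0 hkn m) ?_
  intro u hu hne
  rcases nbr_X m u hu with h | h | h
  · exact absurd h hne
  · rw [h]; exact h1
  · rw [h]; exact h2

lemma forceX_down (hk0 : 0 < k) (hkn : k < n) (m : ℤ)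
    (h0 : Forced (petersen n k) L S (Xv n m))
    (h1 : Forced (petersen n k) L S (Xv n (m+k)))
    (h2 : Forced (petersen n k) L S (Yv n m))
    (hL : Xv n m ∉ L) :
    Forced (petersen n k) L S (Xv n (m-k)) := by
  have hadj : (petersen n k).Adj (Xv n m) (Xv n (m-k)) := by
    have h := (adj_XX (n:=n) hk0 hkn (m-k)).symm
    have he : m - k + k = m := by ring
    rw [he] at h
    exact h
  refine Forced.force (Xv n m) _ h0 hL hadj ?_
  intro u hu hne
  rcases nbr_X m u hu with h | h | h
  · rw [h]; exact h1
  · exact absurd h hne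
  · rw [h]; exact h2

end LFP

namespace LFP
open LF

variable {n k : ℕ} [NeZero n] {L S : Set (Fin n ⊕ Fin n)}

lemma chain_up (hn2 : 2 ≤ n) (hk0 : 0 < k) (hkn : k < n)
    (hY1 : Forced (petersen n k) L S (Yv n ((k:ℤ)-1)))
    (hY2 : Forced (petersen n k) L S (Yv n (k:ℤ)))
    (hX : ∀ m : ℤ, 0 ≤ m → m ≤ 2*(k:ℤ)-1 → Forced (petersen n k) L S (Xv n m))
    (t1 : ℕ)
    (hfree : ∀ s : ℕ, s < t1 → Xv n ((k:ℤ)+s) ∉ L ∧ Yv n ((k:ℤ)+s) ∉ L) :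
    ∀ t : ℕ, t ≤ t1 →
      (∀ m : ℤ, (k:ℤ)-1 ≤ m → m ≤ (k:ℤ)+t → Forced (petersen n k) L S (Yv n m)) ∧
      (∀ m : ℤ, 0 ≤ m → m ≤ 2*(k:ℤ)-1+t → Forced (petersen n k) L S (Xv n m)) := by
  intro t
  induction t with
  | zero =>
    intro _
    refine ⟨?_, ?_⟩
    · intro m hm1 hm2
      have hcase : m = (k:ℤ)-1 ∨ m = (k:ℤ) := by push_cast at hm2; omega
      rcases hcase with h | h
      · rw [h]; exact hY1
      · rw [h]; exact hY2
    · intro m hm1 hm2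
      exact hX m hm1 (by push_cast at hm2 ⊢; omega)
  | succ t ih =>
    intro ht
    obtain ⟨ihY, ihX⟩ := ih (by omega)
    have hfr := hfree t (by omega)
    have hYnew : Forced (petersen n k) L S (Yv n (((k:ℤ)+t)+1)) := by
      apply forceY_up hn2 ((k:ℤ)+t)
      · exact ihY _ (by omega) (by omega)
      · exact ihY _ (by omega) (by omega)
      · exact ihX _ (by omega) (by omega)
      · exact hfr.2
    have hXnew : Forced (petersen n k) L S (Xv n (((k:ℤ)+t)+k)) := by
      apply forceX_up hk0 hkn ((k:ℤ)+t)
      · exact ihX _ (by omega) (by omega)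
      · have h := ihX ((k:ℤ)+t-k) (by omega) (by omega)
        exact h
      · exact ihY _ (by omega) (by omega)
      · exact hfr.1
    refine ⟨?_, ?_⟩
    · intro m hm1 hm2
      rcases (by push_cast at hm2 ⊢; omega : m ≤ (k:ℤ)+t ∨ m = (k:ℤ)+t+1) with h | h
      · exact ihY m hm1 h
      · rw [h]; exact hYnew
    · intro m hm1 hm2
      rcases (by push_cast at hm2 ⊢; omega : m ≤ 2*(k:ℤ)-1+t ∨ m = (k:ℤ)+t+k) with h | h
      · exact ihX m hm1 h
      · rw [h]; exact hXnew

lemma chain_down (hn2 : 2 ≤ n) (hk0 : 0 < k) (hkn : k < n)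
    (hY1 : Forced (petersen n k) L S (Yv n ((k:ℤ)-1)))
    (hY2 : Forced (petersen n k) L S (Yv n (k:ℤ)))
    (hX : ∀ m : ℤ, 0 ≤ m → m ≤ 2*(k:ℤ)-1 → Forced (petersen n k) L S (Xv n m))
    (t2 : ℕ)
    (hfree : ∀ s : ℕ, s < t2 → Xv n ((k:ℤ)-1-s) ∉ L ∧ Yv n ((k:ℤ)-1-s) ∉ L) :
    ∀ t : ℕ, t ≤ t2 →
      (∀ m : ℤ, (k:ℤ)-1-t ≤ m → m ≤ (k:ℤ) → Forced (petersen n k) L S (Yv n m)) ∧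
      (∀ m : ℤ, -(t:ℤ) ≤ m → m ≤ 2*(k:ℤ)-1 → Forced (petersen n k) L S (Xv n m)) := by
  intro t
  induction t with
  | zero =>
    intro _
    refine ⟨?_, ?_⟩
    · intro m hm1 hm2
      have hcase : m = (k:ℤ)-1 ∨ m = (k:ℤ) := by push_cast at hm1; omega
      rcases hcase with h | h
      · rw [h]; exact hY1
      · rw [h]; exact hY2
    · intro m hm1 hm2
      exact hX m (by push_cast at hm1; omega) hm2
  | succ t ih =>
    intro ht
    obtain ⟨ihY, ihX⟩ := ih (by omega)
    have hfr := hfree t (by omega)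
    have hYnew : Forced (petersen n k) L S (Yv n (((k:ℤ)-1-t)-1)) := by
      apply forceY_down hn2 ((k:ℤ)-1-t)
      · exact ihY _ (by omega) (by omega)
      · exact ihY _ (by omega) (by omega)
      · exact ihX _ (by omega) (by omega)
      · exact hfr.2
    have hXnew : Forced (petersen n k) L S (Xv n (((k:ℤ)-1-t)-k)) := by
      apply forceX_down hk0 hkn ((k:ℤ)-1-t)
      · exact ihX _ (by omega) (by omega)
      · exact ihX _ (by omega) (by omega)
      · exact ihY _ (by omega) (by omega)
      · exact hfr.1
    refine ⟨?_, ?_⟩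
    · intro m hm1 hm2
      rcases (by push_cast at hm1 ⊢; omega : (k:ℤ)-1-t ≤ m ∨ m = (k:ℤ)-1-t-1) with h | h
      · exact ihY m h hm2
      · rw [h]; exact hYnew
    · intro m hm1 hm2
      rcases (by push_cast at hm1 ⊢; omega : -(t:ℤ) ≤ m ∨ m = (k:ℤ)-1-t-k) with h | h
      · exact ihX m h hm2
      · rw [h]; exact hXnew

end LFP

namespace LFP
open LF

variable {n k : ℕ} [NeZero n] {L S : Set (Fin n ⊕ Fin n)}

lemma dvd_bounded_eq_zero {N d : ℤ} (h : N ∣ d) (h1 : -N < d) (h2 : d < N) : d = 0 := by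
  by_contra hd
  have habs : 0 < |d| := abs_pos.mpr hd
  have hle : N ≤ |d| := Int.le_of_dvd habs ((dvd_abs N d).mpr h)
  rcases abs_cases d with ⟨he, _⟩ | ⟨he, _⟩ <;> omega

lemma en_fin (a : Fin n) : en n (a.val : ℤ) = a := by
  apply Fin.ext
  have h := en_val (n:=n) (a.val : ℤ)
  have h2 : ((a.val : ℤ)) % (n:ℤ) = (a.val : ℤ) :=
    Int.emod_eq_of_lt (by positivity) (by exact_mod_cast a.isLt)
  rw [h2] at h
  exact_mod_cast h

lemma en_eq_fin_iff (z : ℤ) (a : Fin n) : en n z = a ↔ z ≡ (a.val : ℤ) [ZMOD n] := by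
  rw [← en_fin a, en_eq_iff, en_fin]
  rfl

lemma main_force (hn2 : 2 ≤ n) (hk0 : 0 < k) (hkn : 2*k+1 ≤ n)
    (hY1 : Forced (petersen n k) L S (Yv n ((k:ℤ)-1)))
    (hY2 : Forced (petersen n k) L S (Yv n (k:ℤ)))
    (hX : ∀ m : ℤ, 0 ≤ m → m ≤ 2*(k:ℤ)-1 → Forced (petersen n k) L S (Xv n m))
    (a : Fin n) (hsub : L ⊆ {Sum.inl a, Sum.inr a}) :
    ∀ v, Forced (petersen n k) L S v := by
  have hkn' : k < n := by omega
  have hnpos : 0 < (n:ℤ) := by exact_mod_cast Nat.pos_of_ne_zero (NeZero.ne n)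
  set t1 : ℕ := (((a.val : ℤ) - k) % n).toNat with ht1def
  set t2 : ℕ := (((k:ℤ) - 1 - a.val) % n).toNat with ht2def
  have ht1z : (t1 : ℤ) = ((a.val : ℤ) - k) % n :=
    Int.toNat_of_nonneg (Int.emod_nonneg _ (ne_of_gt hnpos))
  have ht2z : (t2 : ℤ) = ((k:ℤ) - 1 - a.val) % n :=
    Int.toNat_of_nonneg (Int.emod_nonneg _ (ne_of_gt hnpos))
  have ht1lt : (t1 : ℤ) < n := by rw [ht1z]; exact Int.emod_lt_of_pos _ hnpos
  have ht2lt : (t2 : ℤ) < n := by rw [ht2z]; exact Int.emod_lt_of_pos _ hnpos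
  have ht1m : (t1 : ℤ) ≡ (a.val : ℤ) - k [ZMOD n] := by
    rw [ht1z]; exact Int.emod_emod_of_dvd _ dvd_rfl
  have ht2m : (t2 : ℤ) ≡ (k:ℤ) - 1 - a.val [ZMOD n] := by
    rw [ht2z]; exact Int.emod_emod_of_dvd _ dvd_rfl
  have hcong1 : (k:ℤ) + t1 ≡ (a.val : ℤ) [ZMOD n] := by
    have h := Int.ModEq.add_left (k:ℤ) ht1m
    have he : (k:ℤ) + ((a.val : ℤ) - k) = (a.val : ℤ) := by ring
    rwa [he] at h
  have hcong2 : (k:ℤ) - 1 - t2 ≡ (a.val : ℤ) [ZMOD n] := by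
    have h := Int.ModEq.sub_left ((k:ℤ) - 1) ht2m
    have he : (k:ℤ) - 1 - ((k:ℤ) - 1 - a.val) = (a.val : ℤ) := by ring
    rwa [he] at h
  have hsum : (t1 : ℤ) + t2 = n - 1 := by
    have h := Int.ModEq.add ht1m ht2m
    have he : (a.val : ℤ) - k + ((k:ℤ) - 1 - a.val) = -1 := by ring
    rw [he] at h
    have h2 : ((n:ℤ) - 1) ≡ -1 [ZMOD n] := by
      have : (n:ℤ) ∣ (-1 - ((n:ℤ) - 1)) := ⟨-1, by ring⟩
      exact (Int.modEq_iff_dvd.mpr this)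
    have h3 : (t1:ℤ) + t2 ≡ (n:ℤ) - 1 [ZMOD n] := h.trans h2.symm
    have hd := Int.ModEq.dvd h3
    have := dvd_bounded_eq_zero hd (by omega) (by omega)
    omega
  have hfree_up : ∀ s : ℕ, s < t1 → Xv n ((k:ℤ)+s) ∉ L ∧ Yv n ((k:ℤ)+s) ∉ L := by
    intro s hs
    have hne : en n ((k:ℤ)+s) ≠ a := by
      intro h
      rw [en_eq_fin_iff] at h
      have h3 : (k:ℤ) + s ≡ (k:ℤ) + t1 [ZMOD n] := h.trans hcong1.symm
      have hd := Int.ModEq.dvd h3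
      have he : (k:ℤ) + t1 - ((k:ℤ) + s) = (t1:ℤ) - s := by ring
      rw [he] at hd
      have := dvd_bounded_eq_zero hd (by omega) (by omega)
      omega
    constructor
    · intro hv
      rcases hsub hv with h | h
      · exact hne (Sum.inl.inj h)
      · exact Sum.inl_ne_inr h
    · intro hv
      rcases hsub hv with h | h
      · exact Sum.inr_ne_inl h
      · exact hne (Sum.inr.inj h)
  have hfree_down : ∀ s : ℕ, s < t2 → Xv n ((k:ℤ)-1-s) ∉ L ∧ Yv n ((k:ℤ)-1-s) ∉ L := by
    intro s hs
    have hne : en n ((k:ℤ)-1-s) ≠ a := by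
      intro h
      rw [en_eq_fin_iff] at h
      have h3 : (k:ℤ) - 1 - s ≡ (k:ℤ) - 1 - t2 [ZMOD n] := h.trans hcong2.symm
      have hd := Int.ModEq.dvd h3
      have he : (k:ℤ) - 1 - t2 - ((k:ℤ) - 1 - s) = (s:ℤ) - t2 := by ring
      rw [he] at hd
      have := dvd_bounded_eq_zero hd (by omega) (by omega)
      omega
    constructor
    · intro hv
      rcases hsub hv with h | h
      · exact hne (Sum.inl.inj h)
      · exact Sum.inl_ne_inr h
    · intro hv
      rcases hsub hv with h | h
      · exact Sum.inr_ne_inl h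
      · exact hne (Sum.inr.inj h)
  obtain ⟨upY, upX⟩ := chain_up hn2 hk0 hkn' hY1 hY2 hX t1 hfree_up t1 le_rfl
  obtain ⟨dnY, dnX⟩ := chain_down hn2 hk0 hkn' hY1 hY2 hX t2 hfree_down t2 le_rfl
  have coverY : ∀ m : ℤ, (k:ℤ)-1-t2 ≤ m → m ≤ (k:ℤ)+t1 → Forced (petersen n k) L S (Yv n m) := by
    intro m hm1 hm2
    rcases le_or_gt m ((k:ℤ)) with h | h
    · exact dnY m hm1 h
    · exact upY m (by omega) hm2
  have coverX : ∀ m : ℤ, -(t2:ℤ) ≤ m → m ≤ 2*(k:ℤ)-1+t1 → Forced (petersen n k) L S (Xv n m) := by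
    intro m hm1 hm2
    rcases le_or_gt m (2*(k:ℤ)-1) with h | h
    · exact dnX m hm1 h
    · exact upX m (by omega) hm2
  intro v
  cases v with
  | inl r =>
    set m : ℤ := -(t2:ℤ) + (((r.val : ℤ) + t2) % n) with hmdef
    have hm0 : 0 ≤ ((r.val : ℤ) + t2) % n := Int.emod_nonneg _ (ne_of_gt hnpos)
    have hm1 : ((r.val : ℤ) + t2) % n < n := Int.emod_lt_of_pos _ hnpos
    have hmr : en n m = r := by
      rw [en_eq_fin_iff]
      have h1 : ((r.val : ℤ) + t2) % n ≡ (r.val : ℤ) + t2 [ZMOD n] :=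
        Int.emod_emod_of_dvd _ dvd_rfl
      have h2 := Int.ModEq.add_left (-(t2:ℤ)) h1
      have he : -(t2:ℤ) + ((r.val : ℤ) + t2) = (r.val : ℤ) := by ring
      rwa [he] at h2
    have hforced := coverX m (by omega) (by omega)
    have heq : Xv n m = (Sum.inl r : Fin n ⊕ Fin n) := congrArg Sum.inl hmr
    rw [← heq]
    exact hforced
  | inr r =>
    set m : ℤ := ((k:ℤ)-1-t2) + (((r.val : ℤ) - ((k:ℤ)-1-t2)) % n) with hmdef
    have hm0 : 0 ≤ ((r.val : ℤ) - ((k:ℤ)-1-t2)) % n := Int.emod_nonneg _ (ne_of_gt hnpos)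
    have hm1 : ((r.val : ℤ) - ((k:ℤ)-1-t2)) % n < n := Int.emod_lt_of_pos _ hnpos
    have hmr : en n m = r := by
      rw [en_eq_fin_iff]
      have h1 : ((r.val : ℤ) - ((k:ℤ)-1-t2)) % n ≡ (r.val : ℤ) - ((k:ℤ)-1-t2) [ZMOD n] :=
        Int.emod_emod_of_dvd _ dvd_rfl
      have h2 := Int.ModEq.add_left ((k:ℤ)-1-(t2:ℤ)) h1
      have he : ((k:ℤ)-1-(t2:ℤ)) + ((r.val : ℤ) - ((k:ℤ)-1-t2)) = (r.val : ℤ) := by ring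
      rwa [he] at h2
    have hforced := coverY m (by omega) (by omega)
    have heq : Yv n m = (Sum.inr r : Fin n ⊕ Fin n) := congrArg Sum.inr hmr
    rw [← heq]
    exact hforced

end LFP

namespace LFP
open LF

variable {n k : ℕ} [NeZero n]

def SS (n k : ℕ) [NeZero n] : Finset (Fin n ⊕ Fin n) :=
  ((Finset.range (2*k)).image (fun i : ℕ => (Sum.inl (en n (i:ℤ)) : Fin n ⊕ Fin n))) ∪
  {Sum.inr (en n ((k:ℤ)-1)), Sum.inr (en n (k:ℤ))}

lemma en_inj_of_lt {i j : ℕ} (hi : i < n) (hj : j < n) (h : en n (i:ℤ) = en n (j:ℤ)) : i = j := by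
  rw [en_eq_iff] at h
  rw [Int.emod_eq_of_lt (by positivity) (by exact_mod_cast hi),
      Int.emod_eq_of_lt (by positivity) (by exact_mod_cast hj)] at h
  exact_mod_cast h

lemma SS_card (hn2 : 2 ≤ n) (hkn : 2*k+1 ≤ n) : (SS n k).card = 2*k+2 := by
  rw [SS, Finset.card_union_of_disjoint, Finset.card_image_of_injOn, Finset.card_range]
  · rw [Finset.card_insert_of_notMem, Finset.card_singleton]
    simp only [Finset.mem_singleton, Sum.inr.injEq]
    intro h
    have h2 := en_ne (n:=n) ((k:ℤ)-1) 1 (not_dvd_one hn2)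
    have he : (k:ℤ) - 1 + 1 = (k:ℤ) := by ring
    rw [he] at h2
    exact h2 h
  · intro i hi j hj h
    simp only [Finset.coe_range, Set.mem_Iio] at hi hj
    exact en_inj_of_lt (by omega) (by omega) (Sum.inl.inj h)
  · rw [Finset.disjoint_left]
    intro v hv hv2
    simp only [Finset.mem_image] at hv
    obtain ⟨i, _, hi⟩ := hv
    simp only [Finset.mem_insert, Finset.mem_singleton] at hv2
    rcases hv2 with h | h <;> rw [← hi] at h <;> exact Sum.inl_ne_inr h

lemma init_X (m : ℤ) (h1 : 0 ≤ m) (h2 : m ≤ 2*(k:ℤ)-1) : Xv n m ∈ SS n k := by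
  rw [SS, Finset.mem_union]
  left
  rw [Finset.mem_image]
  refine ⟨m.toNat, ?_, ?_⟩
  · rw [Finset.mem_range]; omega
  · have he : ((m.toNat : ℕ) : ℤ) = m := Int.toNat_of_nonneg h1
    rw [Xv, he]

lemma init_Y1 : Yv n ((k:ℤ)-1) ∈ SS n k := by
  rw [SS, Finset.mem_union]
  right
  simp [Yv]

lemma init_Y2 : Yv n (k:ℤ) ∈ SS n k := by
  rw [SS, Finset.mem_union]
  right
  simp [Yv]

end LFP

theorem stmt11 (n k : ℕ) (hn : 3 ≤ n) (hk : 1 ≤ k) (hn2k : 2 * k ≤ n)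
    (hkn : 2 * k + 1 ≤ n) :
    LF.leakyForcingNumber (LF.petersen n k) 1 ≤ 2 * k + 2 := by
  haveI : NeZero n := ⟨by omega⟩
  have key : LF.IsLeakyForcingSet (LF.petersen n k) 1 ↑(LFP.SS n k) := by
    intro L hL v
    obtain ⟨a, hsub⟩ : ∃ a : Fin n, L ⊆ {Sum.inl a, Sum.inr a} := by
      rcases Set.eq_empty_or_nonempty L with h | h
      · exact ⟨LFP.en n 0, by rw [h]; exact Set.empty_subset _⟩
      · have h0 : 0 < L.ncard := (Set.ncard_pos (Set.toFinite L)).mpr h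
        have h1 : L.ncard = 1 := le_antisymm hL h0
        obtain ⟨x, hx⟩ := Set.ncard_eq_one.mp h1
        cases x with
        | inl a =>
          refine ⟨a, ?_⟩
          rw [hx]
          intro u hu
          rw [Set.mem_singleton_iff] at hu
          rw [hu]; exact Set.mem_insert _ _
        | inr a =>
          refine ⟨a, ?_⟩
          rw [hx]
          intro u hu
          rw [Set.mem_singleton_iff] at hu
          rw [hu]
          exact Set.mem_insert_of_mem _ rfl
    exact LFP.main_force (by omega) (by omega) (by omega)
      (LF.Forced.init _ (Finset.mem_coe.mpr LFP.init_Y1))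
      (LF.Forced.init _ (Finset.mem_coe.mpr LFP.init_Y2))
      (fun m h1 h2 => LF.Forced.init _ (Finset.mem_coe.mpr (LFP.init_X m h1 h2))) a hsub v
  apply Nat.sInf_le
  exact ⟨LFP.SS n k, LFP.SS_card (by omega) (by omega), key⟩
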